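/- Let K ⊆ ℝⁿ be a convex body. If there exists a dense set T of directions in S^{n-1} such that for each u ∈ T the midpoints of all chords of K parallel to u lie in a single affine hyperplane, then for every direction u ∈ S^{n-1} the midpoints of chords of K parallel to u lie in a single affine hyperplane. -/

import Mathlib

open Set Filter Metric Topology

section helpers

variable {E : Type*} [NormedAddCommGroup E] [NormedSpace ℝ E]

lemma sset_abs_le {K : Set E} {R : ℝ} (hR : ∀ y ∈ K, ‖y‖ ≤ R) {x u : E} (hu : ‖u‖ = 1)
    {s : ℝ} (hs : x + s • u ∈ K) : |s| ≤ R + ‖x‖ := by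
  have h1 : ‖x + s • u‖ ≤ R := hR _ hs
  have h2 : ‖(x + s • u) - x‖ ≤ ‖x + s • u‖ + ‖x‖ := norm_sub_le _ _
  have h3 : (x + s • u) - x = s • u := by abel
  rw [h3, norm_smul, hu, mul_one, Real.norm_eq_abs] at h2
  linarith

lemma sset_bddAbove {K : Set E} {R : ℝ} (hR : ∀ y ∈ K, ‖y‖ ≤ R) {x u : E} (hu : ‖u‖ = 1) :
    BddAbove {s : ℝ | x + s • u ∈ K} :=
  ⟨R + ‖x‖, fun _ hs => (abs_le.mp (sset_abs_le hR hu hs)).2⟩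

lemma sset_bddBelow {K : Set E} {R : ℝ} (hR : ∀ y ∈ K, ‖y‖ ≤ R) {x u : E} (hu : ‖u‖ = 1) :
    BddBelow {s : ℝ | x + s • u ∈ K} :=
  ⟨-(R + ‖x‖), fun _ hs => (abs_le.mp (sset_abs_le hR hu hs)).1⟩

lemma sset_isClosed {K : Set E} (hKc : IsClosed K) (x u : E) :
    IsClosed {s : ℝ | x + s • u ∈ K} :=
  hKc.preimage (continuous_const.add (continuous_id.smul continuous_const))

lemma sset_convex {K : Set E} (hKconv : Convex ℝ K) (x u : E) :
    Convex ℝ {s : ℝ | x + s • u ∈ K} := by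
  intro a ha b hb p q hp hq hpq
  simp only [mem_setOf_eq, smul_eq_mul] at *
  have heq : x + (p * a + q * b) • u = p • (x + a • u) + q • (x + b • u) := by
    calc x + (p * a + q * b) • u = (p + q) • x + (p * a + q * b) • u := by
          rw [hpq, one_smul]
      _ = p • (x + a • u) + q • (x + b • u) := by module
  rw [heq]
  exact hKconv ha hb hp hq hpq

lemma chordU {K : Set E} (hKc : IsCompact K) {R : ℝ} (hR : ∀ y ∈ K, ‖y‖ ≤ R)
    {x u : E} (hu : ‖u‖ = 1) {xk uk : ℕ → E} (huk : ∀ k, ‖uk k‖ = 1)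
    (hx : Tendsto xk atTop (𝓝 x)) (htu : Tendsto uk atTop (𝓝 u))
    (hS : {s : ℝ | x + s • u ∈ K}.Nonempty) {ε : ℝ} (hε : 0 < ε) :
    ∀ᶠ k in atTop, ∀ s : ℝ, xk k + s • uk k ∈ K →
      sInf {s : ℝ | x + s • u ∈ K} - ε < s ∧ s < sSup {s : ℝ | x + s • u ∈ K} + ε := by
  obtain ⟨s₁, hs₁⟩ := hS
  have hKne : K.Nonempty := ⟨_, hs₁⟩
  set S := {s : ℝ | x + s • u ∈ K} with hSdef
  set α := sInf S with hα
  set β := sSup S with hβ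
  have hbddA : BddAbove S := sset_bddAbove hR hu
  have hbddB : BddBelow S := sset_bddBelow hR hu
  have hR0 : 0 ≤ R := le_trans (norm_nonneg _) (hR _ hs₁)
  set M := R + ‖x‖ + 1 with hM
  have hM0 : 0 < M := by positivity
  set D := Icc (-M) M ∩ (Iic (α - ε) ∪ Ici (β + ε)) with hD
  have hDc : IsCompact D := isCompact_Icc.inter_right (isClosed_Iic.union isClosed_Ici)
  obtain ⟨δ, hδ0, hδ⟩ : ∃ δ : ℝ, 0 < δ ∧ ∀ s ∈ D, δ ≤ infDist (x + s • u) K := by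
    rcases D.eq_empty_or_nonempty with h | hne
    · exact ⟨1, one_pos, by simp [h]⟩
    · have hcont : ContinuousOn (fun s : ℝ => infDist (x + s • u) K) D :=
        ((continuous_infDist_pt K).comp
          (continuous_const.add (continuous_id.smul continuous_const))).continuousOn
      obtain ⟨s₂, hs₂D, hmin⟩ := hDc.exists_isMinOn hne hcont
      refine ⟨_, ?_, fun s hs => hmin hs⟩
      have hnot : x + s₂ • u ∉ K := by
        intro hmem
        have h1 : α ≤ s₂ := csInf_le hbddB hmem
        have h2 : s₂ ≤ β := le_csSup hbddA hmem
        rcases hs₂D.2 with h | h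
        · have := mem_Iic.mp h; linarith
        · have := mem_Ici.mp h; linarith
      exact (hKc.isClosed.notMem_iff_infDist_pos hKne).mp hnot
  have hev1 : ∀ᶠ k in atTop, dist (xk k) x < min (δ / 2) 1 :=
    Metric.tendsto_nhds.mp hx _ (by positivity)
  have hev2 : ∀ᶠ k in atTop, dist (uk k) u < δ / (2 * M) :=
    Metric.tendsto_nhds.mp htu _ (by positivity)
  filter_upwards [hev1, hev2] with k h1 h2
  intro s hsK
  have hxkn : ‖xk k‖ ≤ ‖x‖ + 1 := by
    have h4 : ‖xk k‖ ≤ ‖x‖ + dist (xk k) x := by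
      rw [dist_eq_norm]
      have := norm_add_le x (xk k - x)
      simpa using this
    have h5 : dist (xk k) x < 1 := lt_of_lt_of_le h1 (min_le_right _ _)
    linarith
  have hsb : |s| ≤ M := by
    have := sset_abs_le hR (huk k) hsK
    rw [hM]; linarith
  by_contra hcon
  have hsD : s ∈ D := by
    refine ⟨abs_le.mp hsb, ?_⟩
    rcases not_and_or.mp hcon with h | h
    · exact Or.inl (mem_Iic.mpr (by push_neg at h; linarith))
    · exact Or.inr (mem_Ici.mpr (by push_neg at h; linarith))
  have hd : dist (x + s • u) (xk k + s • uk k) < δ := by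
    have heq : x + s • u - (xk k + s • uk k) = (x - xk k) + s • (u - uk k) := by module
    rw [dist_eq_norm, heq]
    have hb1 : ‖x - xk k‖ < δ / 2 := by
      rw [← dist_eq_norm, dist_comm]
      exact lt_of_lt_of_le h1 (min_le_left _ _)
    have hb2 : ‖s • (u - uk k)‖ ≤ M * (δ / (2 * M)) := by
      rw [norm_smul, Real.norm_eq_abs]
      have : ‖u - uk k‖ ≤ δ / (2 * M) := by
        rw [← dist_eq_norm, dist_comm]; exact h2.le
      exact mul_le_mul hsb this (norm_nonneg _) hM0.le
    have hMδ : M * (δ / (2 * M)) = δ / 2 := by field_simp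
    calc ‖(x - xk k) + s • (u - uk k)‖ ≤ ‖x - xk k‖ + ‖s • (u - uk k)‖ := norm_add_le _ _
      _ < δ / 2 + δ / 2 := by rw [hMδ] at hb2; linarith
      _ = δ := by ring
  have hle : infDist (x + s • u) K ≤ dist (x + s • u) (xk k + s • uk k) :=
    infDist_le_dist_of_mem hsK
  have := hδ s hsD
  linarith

lemma chordL {K : Set E} (hKconv : Convex ℝ K) {x u : E} {xk uk : ℕ → E}
    (hx : Tendsto xk atTop (𝓝 x)) (htu : Tendsto uk atTop (𝓝 u))
    {s₀ : ℝ} (h₀ : x + s₀ • u ∈ interior K) {b e : ℝ} (he : x + e • u ∈ K) (hb : b < e) :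
    ∀ᶠ k in atTop, ∃ s : ℝ, b < s ∧ xk k + s • uk k ∈ K := by
  obtain ⟨s₁, hs₁b, hs₁⟩ : ∃ s₁ : ℝ, b < s₁ ∧ x + s₁ • u ∈ interior K := by
    rcases lt_or_ge b s₀ with h | h
    · exact ⟨s₀, h, h₀⟩
    · set d := (e - b) / (2 * (e - s₀)) with hd
      have hes : 0 < e - s₀ := by linarith
      have hd0 : 0 < d := div_pos (by linarith) (by linarith)
      have hd1 : d < 1 := by
        rw [hd, div_lt_one (by positivity)]; linarith
      refine ⟨(1 - d) * e + d * s₀, ?_, ?_⟩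
      · have hdd : d * (e - s₀) = (e - b) / 2 := by rw [hd]; field_simp
        nlinarith
      · have heq : x + ((1 - d) * e + d * s₀) • u
            = d • (x + s₀ • u) + (1 - d) • (x + e • u) := by module
        rw [heq]
        exact hKconv.combo_interior_closure_mem_interior h₀ (subset_closure he) hd0
          (by linarith) (by ring)
  have hconv : Tendsto (fun k => xk k + s₁ • uk k) atTop (𝓝 (x + s₁ • u)) :=
    hx.add (htu.const_smul s₁)
  have hmem : interior K ∈ 𝓝 (x + s₁ • u) := isOpen_interior.mem_nhds hs₁
  filter_upwards [hconv hmem] with k hk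
  exact ⟨s₁, hs₁b, interior_subset hk⟩

lemma chordL' {K : Set E} (hKconv : Convex ℝ K) {x u : E} {xk uk : ℕ → E}
    (hx : Tendsto xk atTop (𝓝 x)) (htu : Tendsto uk atTop (𝓝 u))
    {s₀ : ℝ} (h₀ : x + s₀ • u ∈ interior K) {b e : ℝ} (he : x + e • u ∈ K) (hb : e < b) :
    ∀ᶠ k in atTop, ∃ s : ℝ, s < b ∧ xk k + s • uk k ∈ K := by
  have h₀' : x + (-s₀) • (-u) ∈ interior K := by simpa using h₀
  have he' : x + (-e) • (-u) ∈ K := by simpa using he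
  have := chordL hKconv hx htu.neg h₀' he' (by linarith : -b < -e)
  filter_upwards [this] with k hk
  obtain ⟨s, hs1, hs2⟩ := hk
  exact ⟨-s, by linarith, by simpa [smul_neg] using hs2⟩

lemma chordSSup {K : Set E} (hKc : IsCompact K) {R : ℝ} (hR : ∀ y ∈ K, ‖y‖ ≤ R)
    {x u : E} (hu : ‖u‖ = 1) {xk uk : ℕ → E} (huk : ∀ k, ‖uk k‖ = 1)
    (hx : Tendsto xk atTop (𝓝 x)) (htu : Tendsto uk atTop (𝓝 u))
    (hS : {s : ℝ | x + s • u ∈ K}.Nonempty)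
    (hlow : ∀ b < sSup {s : ℝ | x + s • u ∈ K},
      ∀ᶠ k in atTop, ∃ s : ℝ, b < s ∧ xk k + s • uk k ∈ K) :
    Tendsto (fun k => sSup {s : ℝ | xk k + s • uk k ∈ K}) atTop
      (𝓝 (sSup {s : ℝ | x + s • u ∈ K})) := by
  rw [tendsto_order]
  constructor
  · intro b hb
    filter_upwards [hlow b hb] with k hk
    obtain ⟨s, hs1, hs2⟩ := hk
    exact lt_of_lt_of_le hs1 (le_csSup (sset_bddAbove hR (huk k)) hs2)
  · intro b hb
    have hε : 0 < (b - sSup {s : ℝ | x + s • u ∈ K}) / 2 := by linarith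
    filter_upwards [chordU hKc hR hu huk hx htu hS hε,
      hlow (sSup {s : ℝ | x + s • u ∈ K} - 1) (by linarith)] with k hU hk
    obtain ⟨s, _, hs2⟩ := hk
    have : sSup {s : ℝ | xk k + s • uk k ∈ K}
        ≤ sSup {s : ℝ | x + s • u ∈ K} + (b - sSup {s : ℝ | x + s • u ∈ K}) / 2 :=
      csSup_le ⟨s, hs2⟩ fun t ht => (hU t ht).2.le
    linarith

lemma chordSInf {K : Set E} (hKc : IsCompact K) {R : ℝ} (hR : ∀ y ∈ K, ‖y‖ ≤ R)
    {x u : E} (hu : ‖u‖ = 1) {xk uk : ℕ → E} (huk : ∀ k, ‖uk k‖ = 1)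
    (hx : Tendsto xk atTop (𝓝 x)) (htu : Tendsto uk atTop (𝓝 u))
    (hS : {s : ℝ | x + s • u ∈ K}.Nonempty)
    (hlow : ∀ b, sInf {s : ℝ | x + s • u ∈ K} < b →
      ∀ᶠ k in atTop, ∃ s : ℝ, s < b ∧ xk k + s • uk k ∈ K) :
    Tendsto (fun k => sInf {s : ℝ | xk k + s • uk k ∈ K}) atTop
      (𝓝 (sInf {s : ℝ | x + s • u ∈ K})) := by
  rw [tendsto_order]
  constructor
  · intro b hb
    have hε : 0 < (sInf {s : ℝ | x + s • u ∈ K} - b) / 2 := by linarith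
    filter_upwards [chordU hKc hR hu huk hx htu hS hε,
      hlow (sInf {s : ℝ | x + s • u ∈ K} + 1) (by linarith)] with k hU hk
    obtain ⟨s, _, hs2⟩ := hk
    have : sInf {s : ℝ | x + s • u ∈ K} - (sInf {s : ℝ | x + s • u ∈ K} - b) / 2
        ≤ sInf {s : ℝ | xk k + s • uk k ∈ K} :=
      le_csInf ⟨s, hs2⟩ fun t ht => (hU t ht).1.le
    linarith
  · intro b hb
    filter_upwards [hlow b hb] with k hk
    obtain ⟨s, hs1, hs2⟩ := hk
    exact lt_of_le_of_lt (csInf_le (sset_bddBelow hR (huk k)) hs2) hs1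

end helpers

/-- The midpoints of all chords of `K` parallel to `u` lie in the affine
hyperplane `{y | ⟪v, y⟫ = c}`.  For `x` whose line `x + ℝu` meets `K`, the
chord is the segment with endpoint parameters `sInf`/`sSup` of
`{s | x + s • u ∈ K}`, and its midpoint is the average of the endpoints. -/
def chordMidpointsIn {n : ℕ} (K : Set (EuclideanSpace ℝ (Fin n)))
    (u v : EuclideanSpace ℝ (Fin n)) (c : ℝ) : Prop :=
  ∀ x : EuclideanSpace ℝ (Fin n), {s : ℝ | x + s • u ∈ K}.Nonempty →
    (inner ℝ v (x + (((sInf {s : ℝ | x + s • u ∈ K}) +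
        (sSup {s : ℝ | x + s • u ∈ K})) / 2) • u) : ℝ) = c

/-- The midpoints of all chords of `K` parallel to `u` lie in a single affine
hyperplane. -/
def chordMidpointsInHyperplane {n : ℕ} (K : Set (EuclideanSpace ℝ (Fin n)))
    (u : EuclideanSpace ℝ (Fin n)) : Prop :=
  ∃ v : EuclideanSpace ℝ (Fin n), ∃ c : ℝ, v ≠ 0 ∧ chordMidpointsIn K u v c

lemma sset_midpoint_mem {n : ℕ} {K : Set (EuclideanSpace ℝ (Fin n))}
    (hKc : IsCompact K) (hKconv : Convex ℝ K) {R : ℝ} (hR : ∀ y ∈ K, ‖y‖ ≤ R)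
    {x u : EuclideanSpace ℝ (Fin n)} (hu : ‖u‖ = 1)
    (hS : {s : ℝ | x + s • u ∈ K}.Nonempty) :
    x + (((sInf {s : ℝ | x + s • u ∈ K}) + (sSup {s : ℝ | x + s • u ∈ K})) / 2) • u ∈ K := by
  set Sp := {s : ℝ | x + s • u ∈ K} with hSp
  have hclosed : IsClosed Sp := sset_isClosed hKc.isClosed _ _
  have hbddA : BddAbove Sp := sset_bddAbove hR hu
  have hbddB : BddBelow Sp := sset_bddBelow hR hu
  have hαmem : sInf Sp ∈ Sp := hclosed.csInf_mem hS hbddB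
  have hβmem : sSup Sp ∈ Sp := hclosed.csSup_mem hS hbddA
  have hαβ : sInf Sp ≤ sSup Sp := csInf_le_csSup hS hbddB hbddA
  have hmid : (sInf Sp + sSup Sp) / 2 ∈ Sp := by
    have hseg := (sset_convex hKconv x u).segment_subset hαmem hβmem
    rw [segment_eq_Icc hαβ] at hseg
    exact hseg ⟨by linarith, by linarith⟩
  exact hmid

theorem stmt7 {n : ℕ} (K : Set (EuclideanSpace ℝ (Fin n)))
    (hKc : IsCompact K) (hKconv : Convex ℝ K) (hKint : (interior K).Nonempty)
    (T : Set (EuclideanSpace ℝ (Fin n)))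
    (hT : T ⊆ Metric.sphere (0 : EuclideanSpace ℝ (Fin n)) 1)
    (hdense : Metric.sphere (0 : EuclideanSpace ℝ (Fin n)) 1 ⊆ closure T)
    (hmid : ∀ u ∈ T, chordMidpointsInHyperplane K u) :
    ∀ u ∈ Metric.sphere (0 : EuclideanSpace ℝ (Fin n)) 1,
      chordMidpointsInHyperplane K u := by
  intro u hu
  obtain ⟨p, hp⟩ := hKint
  have hpK : p ∈ K := interior_subset hp
  obtain ⟨R, hR⟩ := isBounded_iff_forall_norm_le.mp hKc.isBounded
  have hR0 : 0 ≤ R := le_trans (norm_nonneg p) (hR p hpK)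
  have hu1 : ‖u‖ = 1 := mem_sphere_zero_iff_norm.mp hu
  obtain ⟨useq, huT, huconv⟩ := mem_closure_iff_seq_limit.mp (hdense hu)
  have hun : ∀ k, ‖useq k‖ = 1 := fun k => mem_sphere_zero_iff_norm.mp (hT (huT k))
  have hex : ∀ k, ∃ vc : EuclideanSpace ℝ (Fin n) × ℝ,
      ‖vc.1‖ = 1 ∧ |vc.2| ≤ R ∧ chordMidpointsIn K (useq k) vc.1 vc.2 := by
    intro k
    obtain ⟨v, c, hv0, hvc⟩ := hmid _ (huT k)
    set w := ‖v‖⁻¹ • v with hw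
    have hw1 : ‖w‖ = 1 := norm_smul_inv_norm hv0
    have hwc : chordMidpointsIn K (useq k) w (‖v‖⁻¹ * c) := by
      intro x hx
      rw [hw, real_inner_smul_left, hvc x hx]
    refine ⟨⟨w, ‖v‖⁻¹ * c⟩, hw1, ?_, hwc⟩
    have hp0 : (0:ℝ) ∈ {s : ℝ | p + s • useq k ∈ K} := by
      simp only [mem_setOf_eq, zero_smul, add_zero]; exact hpK
    have hSne : {s : ℝ | p + s • useq k ∈ K}.Nonempty := ⟨0, hp0⟩
    have hmK : p + (((sInf {s : ℝ | p + s • useq k ∈ K}) +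
        (sSup {s : ℝ | p + s • useq k ∈ K})) / 2) • useq k ∈ K :=
      sset_midpoint_mem hKc hKconv hR (hun k) hSne
    have heq := hwc p hSne
    rw [← heq]
    calc |(inner ℝ w (p + (((sInf {s : ℝ | p + s • useq k ∈ K}) +
            (sSup {s : ℝ | p + s • useq k ∈ K})) / 2) • useq k) : ℝ)|
        ≤ ‖w‖ * ‖p + (((sInf {s : ℝ | p + s • useq k ∈ K}) +
            (sSup {s : ℝ | p + s • useq k ∈ K})) / 2) • useq k‖ := abs_real_inner_le_norm _ _
      _ ≤ 1 * R := by
          rw [hw1]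
          exact mul_le_mul_of_nonneg_left (hR _ hmK) zero_le_one
      _ = R := one_mul R
  choose vc hvc1 hvc2 hvc3 using hex
  obtain ⟨⟨v, c⟩, hvcmem, φ, hφ, hconv⟩ :=
    ((isCompact_sphere (0 : EuclideanSpace ℝ (Fin n)) 1).prod
      (isCompact_Icc (a := -R) (b := R))).tendsto_subseq
      (x := fun k => vc k)
      (fun k => Set.mem_prod.mpr
        ⟨mem_sphere_zero_iff_norm.mpr (hvc1 k), mem_Icc.mpr (abs_le.mp (hvc2 k))⟩)
  have hv1 : ‖v‖ = 1 := mem_sphere_zero_iff_norm.mp (Set.mem_prod.mp hvcmem).1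
  have hv0 : v ≠ 0 := by
    intro h; rw [h, norm_zero] at hv1; exact one_ne_zero hv1.symm
  set u' : ℕ → EuclideanSpace ℝ (Fin n) := fun k => useq (φ k) with hu'def
  have hu't : Tendsto u' atTop (𝓝 u) := huconv.comp hφ.tendsto_atTop
  have hu'n : ∀ k, ‖u' k‖ = 1 := fun k => hun (φ k)
  have hvt : Tendsto (fun k => (vc (φ k)).1) atTop (𝓝 v) :=
    (continuous_fst.tendsto _).comp hconv
  have hct : Tendsto (fun k => (vc (φ k)).2) atTop (𝓝 c) :=
    (continuous_snd.tendsto _).comp hconv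
  refine ⟨v, c, hv0, ?_⟩
  have claimA : ∀ y : EuclideanSpace ℝ (Fin n), (∃ s₀ : ℝ, y + s₀ • u ∈ interior K) →
      (inner ℝ v (y + (((sInf {s : ℝ | y + s • u ∈ K}) +
        (sSup {s : ℝ | y + s • u ∈ K})) / 2) • u) : ℝ) = c := by
    rintro y ⟨s₀, hs₀⟩
    have hSne : {s : ℝ | y + s • u ∈ K}.Nonempty := ⟨s₀, show y + s₀ • u ∈ K from interior_subset hs₀⟩
    have hclosed : IsClosed {s : ℝ | y + s • u ∈ K} := sset_isClosed hKc.isClosed _ _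
    have hbddA : BddAbove {s : ℝ | y + s • u ∈ K} := sset_bddAbove hR hu1
    have hbddB : BddBelow {s : ℝ | y + s • u ∈ K} := sset_bddBelow hR hu1
    have hβmem : sSup {s : ℝ | y + s • u ∈ K} ∈ {s : ℝ | y + s • u ∈ K} :=
      hclosed.csSup_mem hSne hbddA
    have hαmem : sInf {s : ℝ | y + s • u ∈ K} ∈ {s : ℝ | y + s • u ∈ K} :=
      hclosed.csInf_mem hSne hbddB
    have hyconst : Tendsto (fun _ : ℕ => y) atTop (𝓝 y) := tendsto_const_nhds
    have hlowS : ∀ b < sSup {s : ℝ | y + s • u ∈ K},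
        ∀ᶠ k in atTop, ∃ s : ℝ, b < s ∧ y + s • u' k ∈ K :=
      fun b hb => chordL hKconv hyconst hu't hs₀ hβmem hb
    have hlowI : ∀ b, sInf {s : ℝ | y + s • u ∈ K} < b →
        ∀ᶠ k in atTop, ∃ s : ℝ, s < b ∧ y + s • u' k ∈ K :=
      fun b hb => chordL' hKconv hyconst hu't hs₀ hαmem hb
    have hSup := chordSSup hKc hR hu1 hu'n hyconst hu't hSne hlowS
    have hInf := chordSInf hKc hR hu1 hu'n hyconst hu't hSne hlowI
    have hmidt : Tendsto (fun k => y + (((sInf {s : ℝ | y + s • u' k ∈ K}) +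
        (sSup {s : ℝ | y + s • u' k ∈ K})) / 2) • u' k)
        atTop (𝓝 (y + (((sInf {s : ℝ | y + s • u ∈ K}) +
          (sSup {s : ℝ | y + s • u ∈ K})) / 2) • u)) :=
      tendsto_const_nhds.add (((hInf.add hSup).div_const 2).smul hu't)
    have hne : ∀ᶠ k in atTop, {s : ℝ | y + s • u' k ∈ K}.Nonempty := by
      have hαβ : sInf {s : ℝ | y + s • u ∈ K} ≤ sSup {s : ℝ | y + s • u ∈ K} :=
        csInf_le_csSup hSne hbddB hbddA
      filter_upwards [hlowS (sSup {s : ℝ | y + s • u ∈ K} - 1) (by linarith)] with k hk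
      obtain ⟨s, _, hs2⟩ := hk
      exact ⟨s, hs2⟩
    have heval : (fun k => (inner ℝ ((vc (φ k)).1) (y + (((sInf {s : ℝ | y + s • u' k ∈ K}) +
        (sSup {s : ℝ | y + s • u' k ∈ K})) / 2) • u' k) : ℝ))
        =ᶠ[atTop] fun k => (vc (φ k)).2 := by
      filter_upwards [hne] with k hk
      exact hvc3 (φ k) y hk
    exact tendsto_nhds_unique ((hvt.inner hmidt).congr' heval) hct
  intro x hxne
  by_cases hint : ∃ s₀ : ℝ, x + s₀ • u ∈ interior K
  · exact claimA x hint
  · have hclosed : IsClosed {s : ℝ | x + s • u ∈ K} := sset_isClosed hKc.isClosed _ _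
    have hbddA : BddAbove {s : ℝ | x + s • u ∈ K} := sset_bddAbove hR hu1
    have hbddB : BddBelow {s : ℝ | x + s • u ∈ K} := sset_bddBelow hR hu1
    have hβmem : sSup {s : ℝ | x + s • u ∈ K} ∈ {s : ℝ | x + s • u ∈ K} :=
      hclosed.csSup_mem hxne hbddA
    have hαmem : sInf {s : ℝ | x + s • u ∈ K} ∈ {s : ℝ | x + s • u ∈ K} :=
      hclosed.csInf_mem hxne hbddB
    set t : ℕ → ℝ := fun k => ((k : ℝ) + 2)⁻¹ with htdef
    have ht0 : ∀ k, 0 < t k := fun k => by positivity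
    have ht1 : ∀ k, t k < 1 := fun k => by
      have h2 : (1 : ℝ) < (k : ℝ) + 2 := by
        have : (0:ℝ) ≤ (k : ℝ) := Nat.cast_nonneg k
        linarith
      exact inv_lt_one_of_one_lt₀ h2
    have htt : Tendsto t atTop (𝓝 0) :=
      tendsto_inv_atTop_zero.comp
        (tendsto_atTop_add_const_right _ 2 tendsto_natCast_atTop_atTop)
    set xk : ℕ → EuclideanSpace ℝ (Fin n) := fun k => x + t k • (p - x) with hxkdef
    have hxk : Tendsto xk atTop (𝓝 x) := by
      have h0 : Tendsto (fun k => x + t k • (p - x)) atTop (𝓝 (x + (0:ℝ) • (p - x))) :=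
        tendsto_const_nhds.add (htt.smul tendsto_const_nhds)
      simpa using h0
    have hhull : ∀ k, ∀ s : ℝ, x + s • u ∈ K → xk k + ((1 - t k) * s) • u ∈ interior K := by
      intro k s hs
      have heq : xk k + ((1 - t k) * s) • u = t k • p + (1 - t k) • (x + s • u) := by
        show x + t k • (p - x) + ((1 - t k) * s) • u = t k • p + (1 - t k) • (x + s • u)
        module
      rw [heq]
      exact hKconv.combo_interior_closure_mem_interior hp (subset_closure hs) (ht0 k)
        (by linarith [ht1 k]) (by ring)
    have huconst : Tendsto (fun _ : ℕ => u) atTop (𝓝 u) := tendsto_const_nhds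
    have hβt : Tendsto (fun k => (1 - t k) * sSup {s : ℝ | x + s • u ∈ K}) atTop
        (𝓝 (sSup {s : ℝ | x + s • u ∈ K})) := by
      have h0 : Tendsto (fun k => (1 - t k) * sSup {s : ℝ | x + s • u ∈ K}) atTop
          (𝓝 ((1 - 0) * sSup {s : ℝ | x + s • u ∈ K})) :=
        (tendsto_const_nhds.sub htt).mul tendsto_const_nhds
      simpa using h0
    have hαt : Tendsto (fun k => (1 - t k) * sInf {s : ℝ | x + s • u ∈ K}) atTop
        (𝓝 (sInf {s : ℝ | x + s • u ∈ K})) := by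
      have h0 : Tendsto (fun k => (1 - t k) * sInf {s : ℝ | x + s • u ∈ K}) atTop
          (𝓝 ((1 - 0) * sInf {s : ℝ | x + s • u ∈ K})) :=
        (tendsto_const_nhds.sub htt).mul tendsto_const_nhds
      simpa using h0
    have hlowS : ∀ b < sSup {s : ℝ | x + s • u ∈ K},
        ∀ᶠ k in atTop, ∃ s : ℝ, b < s ∧ xk k + s • u ∈ K := by
      intro b hb
      filter_upwards [hβt.eventually (eventually_gt_nhds hb)] with k hk
      exact ⟨(1 - t k) * sSup {s : ℝ | x + s • u ∈ K}, hk,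
        interior_subset (hhull k _ hβmem)⟩
    have hlowI : ∀ b, sInf {s : ℝ | x + s • u ∈ K} < b →
        ∀ᶠ k in atTop, ∃ s : ℝ, s < b ∧ xk k + s • u ∈ K := by
      intro b hb
      filter_upwards [hαt.eventually (eventually_lt_nhds hb)] with k hk
      exact ⟨(1 - t k) * sInf {s : ℝ | x + s • u ∈ K}, hk,
        interior_subset (hhull k _ hαmem)⟩
    have hSup := chordSSup hKc hR hu1 (fun _ => hu1) hxk huconst hxne hlowS
    have hInf := chordSInf hKc hR hu1 (fun _ => hu1) hxk huconst hxne hlowI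
    have hmidt : Tendsto (fun k => xk k + (((sInf {s : ℝ | xk k + s • u ∈ K}) +
        (sSup {s : ℝ | xk k + s • u ∈ K})) / 2) • u)
        atTop (𝓝 (x + (((sInf {s : ℝ | x + s • u ∈ K}) +
          (sSup {s : ℝ | x + s • u ∈ K})) / 2) • u)) :=
      hxk.add (((hInf.add hSup).div_const 2).smul tendsto_const_nhds)
    have Hk : ∀ k, (inner ℝ v (xk k + (((sInf {s : ℝ | xk k + s • u ∈ K}) +
        (sSup {s : ℝ | xk k + s • u ∈ K})) / 2) • u) : ℝ) = c :=
      fun k => claimA (xk k) ⟨(1 - t k) * sSup {s : ℝ | x + s • u ∈ K}, hhull k _ hβmem⟩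
    exact tendsto_nhds_unique (Tendsto.congr Hk (tendsto_const_nhds.inner hmidt))
      tendsto_const_nhds
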